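/- For any τ > -2, σ > 0 and 0 ≤ η < 1, the coefficients c_k = 2 ∫_0^∞ t^{τ+4k+1} e^{-t² - σ(1-η)t⁴} dt / Γ((τ+4k+2)/2) satisfy, as k → ∞, c_k ≤ C · k^{-k} (e·η'/(4σ(1-η)))^k · k^{O(1)} for some constant, so that if |f_k| ≤ A (a/e)^k k^{k+b+1/2} then Σ_k c_k |f_k| η^k converges whenever η < 4σ/(a + 4σ). -/

import Mathlib

open MeasureTheory Real Set

lemma integ_bound {p s : ℝ} (hp : -1 < p) (hs : 0 < s) :
    ∫ t in Ioi (0 : ℝ), t ^ p * Real.exp (-t ^ 2 - s * t ^ 4) ≤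
      s ^ (-(p + 1) / 4) * (1 / 4) * Real.Gamma ((p + 1) / 4) := by
  have hint : IntegrableOn (fun t : ℝ => t ^ p * Real.exp (-s * t ^ (4 : ℝ))) (Ioi 0) :=
    integrableOn_rpow_mul_exp_neg_mul_rpow hp (by norm_num) hs
  calc ∫ t in Ioi (0 : ℝ), t ^ p * Real.exp (-t ^ 2 - s * t ^ 4)
      ≤ ∫ t in Ioi (0 : ℝ), t ^ p * Real.exp (-s * t ^ (4 : ℝ)) := by
        apply integral_mono_of_nonneg
        · filter_upwards [ae_restrict_mem measurableSet_Ioi] with t ht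
          have := Real.rpow_nonneg ht.le p
          positivity
        · exact hint
        · filter_upwards [ae_restrict_mem measurableSet_Ioi] with t ht
          have h4 : t ^ (4 : ℝ) = t ^ (4 : ℕ) := by
            rw [show (4 : ℝ) = ((4 : ℕ) : ℝ) by norm_num, Real.rpow_natCast]
          have h1 : -t ^ 2 - s * t ^ 4 ≤ -s * t ^ (4 : ℝ) := by
            rw [h4]; nlinarith [sq_nonneg t]
          exact mul_le_mul_of_nonneg_left (Real.exp_le_exp.2 h1) (Real.rpow_nonneg ht.le p)
    _ = s ^ (-(p + 1) / 4) * (1 / 4) * Real.Gamma ((p + 1) / 4) :=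
        integral_rpow_mul_exp_neg_mul_rpow (by norm_num) hp hs

lemma ratio_eq {q s : ℝ} (hq : 0 < q) (hs : 0 < s) :
    2 * (s ^ (-q) * (1 / 4) * Real.Gamma q) / Real.Gamma (2 * q) =
      (4 * s) ^ (-q) * Real.sqrt π / Real.Gamma (q + 1 / 2) := by
  have hdup := Real.Gamma_mul_Gamma_add_half q
  have h2q : 0 < Real.Gamma (2 * q) := Real.Gamma_pos_of_pos (by linarith)
  have hq2 : 0 < Real.Gamma (q + 1 / 2) := Real.Gamma_pos_of_pos (by linarith)
  have h4 : (4 * s : ℝ) ^ (-q) = (1 / 2) * 2 ^ (1 - 2 * q) * s ^ (-q) := by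
    rw [Real.mul_rpow (by norm_num) hs.le, Real.rpow_sub two_pos, Real.rpow_one]
    have : (4 : ℝ) ^ (-q) = ((2 : ℝ) ^ (2 : ℝ)) ^ (-q) := by norm_num
    rw [this, ← Real.rpow_mul (by norm_num : (0:ℝ) ≤ 2)]
    rw [show (2:ℝ) * -q = -(2*q) by ring, Real.rpow_neg (by norm_num : (0:ℝ) ≤ 2)]
    ring
  rw [h4, div_eq_div_iff h2q.ne' hq2.ne']
  linear_combination (1 / 2) * s ^ (-q) * hdup

set_option maxHeartbeats 1000000 in
theorem stmt_8 (τ σ η a A b : ℝ) (hτ : -2 < τ) (hσ : 0 < σ)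
    (hη0 : 0 ≤ η) (hη1 : η < 1) (ha : 0 < a) (hA : 0 < A)
    (hηstar : η < 4 * σ / (a + 4 * σ))
    (f : ℕ → ℝ)
    (hf : ∀ k : ℕ, 1 ≤ k →
      |f k| ≤ A * (a / Real.exp 1) ^ k * (k : ℝ) ^ ((k : ℝ) + b + 1 / 2)) :
    Summable (fun k : ℕ =>
      (2 * ∫ t in Ioi (0 : ℝ),
          t ^ (τ + 4 * k + 1) * Real.exp (-t ^ 2 - σ * (1 - η) * t ^ 4)) /
        Real.Gamma ((τ + 4 * k + 2) / 2) * |f k| * η ^ k) := by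
  set s : ℝ := σ * (1 - η) with hs_def
  have hs : 0 < s := by have : 0 < 1 - η := by linarith
                        positivity
  have h4s : 0 < 4 * s := by linarith
  -- the geometric ratio
  set r : ℝ := a * η / (4 * s) with hr_def
  have hr0 : 0 ≤ r := by positivity
  have hr1 : r < 1 := by
    rw [hr_def, div_lt_one h4s]
    have h1 : η * (a + 4 * σ) < 4 * σ := by
      rw [lt_div_iff₀ (by linarith)] at hηstar
      linarith
    rw [hs_def]; nlinarith
  set N : ℕ := ⌈b + 3 / 2⌉₊ with hN_def
  have hbN : b + 3 / 2 ≤ (N : ℝ) := Nat.le_ceil _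
  set C : ℝ := Real.sqrt π * (4 * s) ^ (-(τ + 2) / 4) * A with hC_def
  have hC0 : 0 ≤ C := by
    have := Real.sqrt_nonneg π
    have := Real.rpow_nonneg h4s.le (-(τ + 2) / 4)
    positivity
  -- nonnegativity of the terms
  have hterm_nonneg : ∀ k : ℕ, 0 ≤
      (2 * ∫ t in Ioi (0 : ℝ),
          t ^ (τ + 4 * k + 1) * Real.exp (-t ^ 2 - s * t ^ 4)) /
        Real.Gamma ((τ + 4 * k + 2) / 2) * |f k| * η ^ k := by
    intro k
    have hI : 0 ≤ ∫ t in Ioi (0 : ℝ),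
        t ^ (τ + 4 * k + 1) * Real.exp (-t ^ 2 - s * t ^ 4) := by
      apply setIntegral_nonneg measurableSet_Ioi
      intro t ht
      exact mul_nonneg (Real.rpow_nonneg (le_of_lt ht) _) (Real.exp_nonneg _)
    have hG : 0 < Real.Gamma ((τ + 4 * k + 2) / 2) :=
      Real.Gamma_pos_of_pos (by
        have h4k : (0:ℝ) ≤ 4 * (k:ℝ) := by positivity
        linarith)
    positivity
  -- the key pointwise bound for k ≥ 2
  have key : ∀ k : ℕ, 2 ≤ k →
      (2 * ∫ t in Ioi (0 : ℝ),
          t ^ (τ + 4 * k + 1) * Real.exp (-t ^ 2 - s * t ^ 4)) /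
        Real.Gamma ((τ + 4 * k + 2) / 2) * |f k| * η ^ k ≤
      C * ((k : ℝ) ^ N * r ^ k) := by
    intro k hk2
    have hk1 : (1:ℝ) ≤ (k:ℝ) := by exact_mod_cast Nat.one_le_of_lt hk2
    have hk0 : (0:ℝ) < (k:ℝ) := by linarith
    set q : ℝ := (τ + 4 * k + 2) / 4 with hq_def
    have hq : 0 < q := by
      have h4k : (0:ℝ) ≤ 4 * (k:ℝ) := by positivity
      rw [hq_def]; linarith
    have hqhalf : q + 1 / 2 = τ / 4 + k + 1 := by rw [hq_def]; ring
    have hGq : 0 < Real.Gamma (q + 1 / 2) := Real.Gamma_pos_of_pos (by linarith)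
    have hG2q : 0 < Real.Gamma (2 * q) := Real.Gamma_pos_of_pos (by linarith)
    have hp : -1 < τ + 4 * k + 1 := by
      have h4k : (0:ℝ) ≤ 4 * (k:ℝ) := by positivity
      linarith
    have hIb := integ_bound hp hs
    have hq4 : (τ + 4 * k + 1 + 1) / 4 = q := by rw [hq_def]; ring
    have hq4' : -(τ + 4 * k + 1 + 1) / 4 = -q := by rw [hq_def]; ring
    rw [hq4, hq4'] at hIb
    have hInn : 0 ≤ ∫ t in Ioi (0 : ℝ),
        t ^ (τ + 4 * k + 1) * Real.exp (-t ^ 2 - s * t ^ 4) := by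
      apply setIntegral_nonneg measurableSet_Ioi
      intro t ht
      exact mul_nonneg (Real.rpow_nonneg (le_of_lt ht) _) (Real.exp_nonneg _)
    have h2qeq : (τ + 4 * k + 2) / 2 = 2 * q := by rw [hq_def]; ring
    -- factorial facts
    have hfac1 : ((k - 1).factorial : ℝ) ≤ Real.Gamma (q + 1 / 2) := by
      have hmem1 : (k : ℝ) ∈ Ici (2:ℝ) := by
        simp only [mem_Ici]; exact_mod_cast hk2
      have hmem2 : q + 1 / 2 ∈ Ici (2:ℝ) := by
        simp only [mem_Ici]; rw [hqhalf]
        have : (2:ℝ) ≤ (k:ℝ) := by exact_mod_cast hk2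
        linarith
      have hle : (k : ℝ) ≤ q + 1 / 2 := by rw [hqhalf]; linarith
      have hmono := Real.Gamma_strictMonoOn_Ici.monotoneOn hmem1 hmem2 hle
      have hGk : Real.Gamma (k : ℝ) = ((k - 1).factorial : ℝ) := by
        have : ((k - 1 : ℕ) : ℝ) + 1 = (k : ℝ) := by
          have := Nat.succ_pred_eq_of_pos (by omega : 0 < k)
          exact_mod_cast congrArg (Nat.cast : ℕ → ℝ) this
        rw [← this, Real.Gamma_nat_eq_factorial]
      linarith [hmono, hGk.symm.le]
    have hfac2 : (k:ℝ) ^ k ≤ (k.factorial : ℝ) * Real.exp 1 ^ k := by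
      have h := Real.pow_div_factorial_le_exp (x := (k:ℝ)) hk0.le k
      have hek : Real.exp (k:ℝ) = Real.exp 1 ^ k := by
        rw [← Real.exp_nat_mul]; norm_num
      rw [hek] at h
      have hfpos : (0:ℝ) < (k.factorial : ℝ) := by exact_mod_cast k.factorial_pos
      rw [div_le_iff₀ hfpos] at h
      linarith [h]
    have hfac3 : (k.factorial : ℝ) = (k:ℝ) * ((k - 1).factorial : ℝ) := by
      have := Nat.mul_factorial_pred (by omega : k ≠ 0)
      exact_mod_cast this.symm
    -- main chain
    have hDk : (2 * ∫ t in Ioi (0 : ℝ),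
          t ^ (τ + 4 * k + 1) * Real.exp (-t ^ 2 - s * t ^ 4)) /
        Real.Gamma ((τ + 4 * k + 2) / 2) * |f k| * η ^ k ≤
        ((4 * s) ^ (-q) * Real.sqrt π / Real.Gamma (q + 1 / 2)) *
          (A * (a / Real.exp 1) ^ k * (k : ℝ) ^ ((k : ℝ) + b + 1 / 2)) * η ^ k := by
      rw [h2qeq]
      have step2 := ratio_eq hq hs
      have hfk := hf k (by omega)
      have hlhs_nonneg : 0 ≤ (4 * s) ^ (-q) * Real.sqrt π / Real.Gamma (q + 1 / 2) := by
        have := Real.rpow_nonneg h4s.le (-q)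
        have := Real.sqrt_nonneg π
        positivity
      calc (2 * ∫ t in Ioi (0 : ℝ),
          t ^ (τ + 4 * k + 1) * Real.exp (-t ^ 2 - s * t ^ 4)) /
          Real.Gamma (2 * q) * |f k| * η ^ k
          ≤ 2 * (s ^ (-q) * (1 / 4) * Real.Gamma q) / Real.Gamma (2 * q) * |f k| * η ^ k := by
            gcongr
        _ = ((4 * s) ^ (-q) * Real.sqrt π / Real.Gamma (q + 1 / 2)) * |f k| * η ^ k := by
            rw [step2]
        _ ≤ ((4 * s) ^ (-q) * Real.sqrt π / Real.Gamma (q + 1 / 2)) *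
              (A * (a / Real.exp 1) ^ k * (k : ℝ) ^ ((k : ℝ) + b + 1 / 2)) * η ^ k := by
            gcongr
    refine hDk.trans ?_
    -- now purely algebraic
    have e1 : (4 * s) ^ (-q) = (4 * s) ^ (-(τ + 2) / 4) / (4 * s) ^ k := by
      rw [show -q = -(τ + 2) / 4 - (k:ℝ) by rw [hq_def]; push_cast; ring,
        Real.rpow_sub h4s, Real.rpow_natCast]
    have e2 : (k:ℝ) ^ ((k:ℝ) + b + 1 / 2) = (k:ℝ) ^ k * (k:ℝ) ^ (b + 1 / 2) := by
      rw [← Real.rpow_natCast (k:ℝ) k, ← Real.rpow_add hk0]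
      congr 1
      ring
    have e3 : (a / Real.exp 1) ^ k = a ^ k / Real.exp 1 ^ k := div_pow a _ k
    have hquot : (k:ℝ) ^ k * (k:ℝ) ^ (b + 1/2) / (Real.exp 1 ^ k * Real.Gamma (q + 1/2)) ≤
        (k:ℝ) ^ N := by
      have hek : (0:ℝ) < Real.exp 1 ^ k := by positivity
      have h1 : (k:ℝ) ^ k ≤ (k:ℝ) * Real.Gamma (q + 1/2) * Real.exp 1 ^ k := by
        calc (k:ℝ) ^ k ≤ (k.factorial : ℝ) * Real.exp 1 ^ k := hfac2
          _ = (k:ℝ) * ((k - 1).factorial : ℝ) * Real.exp 1 ^ k := by rw [hfac3]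
          _ ≤ (k:ℝ) * Real.Gamma (q + 1/2) * Real.exp 1 ^ k := by gcongr
      have h2 : (k:ℝ) ^ k / (Real.exp 1 ^ k * Real.Gamma (q + 1/2)) ≤ (k:ℝ) := by
        rw [div_le_iff₀ (by positivity)]
        calc (k:ℝ) ^ k ≤ (k:ℝ) * Real.Gamma (q + 1/2) * Real.exp 1 ^ k := h1
          _ = (k:ℝ) * (Real.exp 1 ^ k * Real.Gamma (q + 1/2)) := by ring
      have h3 : (k:ℝ) ^ (b + 1/2) * (k:ℝ) ≤ (k:ℝ) ^ N := by
        calc (k:ℝ) ^ (b + 1/2) * (k:ℝ)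
            = (k:ℝ) ^ (b + 3/2) := by
              rw [show b + 3/2 = b + 1/2 + 1 by ring, Real.rpow_add_one hk0.ne']
          _ ≤ (k:ℝ) ^ ((N:ℕ):ℝ) := Real.rpow_le_rpow_of_exponent_le hk1 hbN
          _ = (k:ℝ) ^ N := Real.rpow_natCast _ N
      calc (k:ℝ) ^ k * (k:ℝ) ^ (b + 1/2) / (Real.exp 1 ^ k * Real.Gamma (q + 1/2))
          = (k:ℝ) ^ (b + 1/2) * ((k:ℝ) ^ k / (Real.exp 1 ^ k * Real.Gamma (q + 1/2))) := by
            ring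
        _ ≤ (k:ℝ) ^ (b + 1/2) * (k:ℝ) := by
            have : (0:ℝ) ≤ (k:ℝ) ^ (b + 1/2) := Real.rpow_nonneg hk0.le _
            exact mul_le_mul_of_nonneg_left h2 this
        _ ≤ (k:ℝ) ^ N := h3
    -- rewrite LHS into product form and conclude
    have lhs_eq : ((4 * s) ^ (-q) * Real.sqrt π / Real.Gamma (q + 1 / 2)) *
          (A * (a / Real.exp 1) ^ k * (k : ℝ) ^ ((k : ℝ) + b + 1 / 2)) * η ^ k =
        C * ((a ^ k * η ^ k / (4 * s) ^ k) *
          ((k:ℝ) ^ k * (k:ℝ) ^ (b + 1/2) / (Real.exp 1 ^ k * Real.Gamma (q + 1/2)))) := by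
      rw [e1, e2, e3, hC_def]
      ring
    have rk_eq : r ^ k = a ^ k * η ^ k / (4 * s) ^ k := by
      rw [hr_def, div_pow, mul_pow]
    rw [lhs_eq, rk_eq]
    have hfrac0 : 0 ≤ a ^ k * η ^ k / (4 * s) ^ k := by positivity
    calc C * ((a ^ k * η ^ k / (4 * s) ^ k) *
          ((k:ℝ) ^ k * (k:ℝ) ^ (b + 1/2) / (Real.exp 1 ^ k * Real.Gamma (q + 1/2))))
        ≤ C * ((a ^ k * η ^ k / (4 * s) ^ k) * (k:ℝ) ^ N) := by
          apply mul_le_mul_of_nonneg_left _ hC0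
          exact mul_le_mul_of_nonneg_left hquot hfrac0
      _ = C * ((k : ℝ) ^ N * (a ^ k * η ^ k / (4 * s) ^ k)) := by ring
  -- conclude summability
  have hg : Summable (fun k : ℕ => C * ((k : ℝ) ^ N * r ^ k)) := by
    apply Summable.mul_left
    exact summable_pow_mul_geometric_of_norm_lt_one N (by
      rwa [Real.norm_eq_abs, abs_of_nonneg hr0])
  rw [← summable_nat_add_iff 2]
  apply Summable.of_nonneg_of_le (fun n => hterm_nonneg (n + 2))
    (fun n => key (n + 2) (by omega))
  exact (summable_nat_add_iff 2).2 hg
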